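/- Let γ be a periodic orbit of period T > 0 of the C¹ planar system ẋ = P(x,y), ẏ = Q(x,y) on an open set U ⊆ ℝ². Suppose f : U → ℝ is C¹ with γ ⊆ {f = 0}, there is a C¹ function k with ∇f·(P,Q) = k·f on U, and every point p with f(p) = 0 and ∇f(p) = 0 is a singular point of the system. Then ∫₀ᵀ (∂P/∂x + ∂Q/∂y)(γ(t)) dt = ∫₀ᵀ k(γ(t)) dt. -/

import Mathlib

open Set Filter Metric intervalIntegral

lemma clm_apply_basis (L : ℝ × ℝ →L[ℝ] ℝ) (v : ℝ × ℝ) :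
    L v = v.1 * L (1, 0) + v.2 * L (0, 1) := by
  have hv : v = v.1 • ((1:ℝ), (0:ℝ)) + v.2 • ((0:ℝ), (1:ℝ)) := by
    ext <;> simp
  rw [hv, map_add, map_smul, map_smul, smul_eq_mul, smul_eq_mul]
  simp

lemma clm_decomp (L : ℝ × ℝ →L[ℝ] ℝ) (p q : ℝ) (hρ : p ^ 2 + q ^ 2 ≠ 0)
    (hX : L (p, q) = 0) (v : ℝ × ℝ) :
    L v = L (-q, p) * ((-q) * v.1 + p * v.2) / (p ^ 2 + q ^ 2) := by
  rw [clm_apply_basis L (p, q)] at hX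
  simp only at hX
  rw [clm_apply_basis L v, clm_apply_basis L (-q, p)]
  simp only
  field_simp
  linear_combination (p * v.1 + q * v.2) * hX

lemma const_of_singular {U : Set (ℝ × ℝ)} (hU : IsOpen U) {X : ℝ × ℝ → ℝ × ℝ}
    (hX : ContDiffOn ℝ 1 X U) {γ : ℝ → ℝ × ℝ} (hγU : ∀ t, γ t ∈ U)
    (hγ : ∀ t, HasDerivAt γ (X (γ t)) t) {t₀ : ℝ} (h0 : X (γ t₀) = 0) :
    ∀ t, γ t = γ t₀ := by
  have hγc : Continuous γ := continuous_iff_continuousAt.2 fun t => (hγ t).continuousAt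
  set S : Set ℝ := {t | γ t = γ t₀} with hS
  have hopen : IsOpen S := by
    rw [isOpen_iff_mem_nhds]
    intro t₁ ht₁
    have ht₁' : γ t₁ = γ t₀ := ht₁
    have hx1 : X (γ t₁) = 0 := by rw [ht₁']; exact h0
    obtain ⟨K, s, hs, hlip⟩ :=
      (hX.contDiffAt (hU.mem_nhds (hγU t₁))).exists_lipschitzOnWith
    have heq : γ =ᶠ[nhds t₁] (fun _ => γ t₁) := by
      refine ODE_solution_unique_of_eventually (v := fun _ x => X x) (s := fun _ => s)
        (Filter.Eventually.of_forall fun _ => hlip) ?_ ?_ rfl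
      · filter_upwards [(hγc.tendsto t₁).eventually_mem hs] with t h
        exact ⟨hγ t, h⟩
      · filter_upwards with t
        refine ⟨?_, mem_of_mem_nhds hs⟩
        rw [hx1]
        exact hasDerivAt_const t (γ t₁)
    filter_upwards [heq] with t h
    show γ t = γ t₀
    rw [h, ht₁']
  have hclosed : IsClosed S := isClosed_eq hγc continuous_const
  have huniv : S = univ := IsClopen.eq_univ ⟨hclosed, hopen⟩ ⟨t₀, rfl⟩
  intro t
  exact (huniv ▸ mem_univ t : t ∈ S)

set_option maxHeartbeats 3000000 in
theorem stmt_2 (U : Set (ℝ × ℝ)) (hU : IsOpen U)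
    (P Q f k : ℝ × ℝ → ℝ)
    (hP : ContDiffOn ℝ 1 P U) (hQ : ContDiffOn ℝ 1 Q U)
    (hf : ContDiffOn ℝ 1 f U) (hk : ContDiffOn ℝ 1 k U)
    (γ : ℝ → ℝ × ℝ) (T : ℝ) (hT : 0 < T)
    (hγU : ∀ t, γ t ∈ U)
    (hγ : ∀ t, HasDerivAt γ (P (γ t), Q (γ t)) t)
    (hper : Function.Periodic γ T)
    (hnc : ∃ t₁ t₂ : ℝ, γ t₁ ≠ γ t₂)
    (hγf : ∀ t, f (γ t) = 0)
    (hinv : ∀ p ∈ U, P p * fderiv ℝ f p (1, 0) + Q p * fderiv ℝ f p (0, 1)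
      = k p * f p)
    (hsing : ∀ p ∈ U, f p = 0 → fderiv ℝ f p = 0 → P p = 0 ∧ Q p = 0) :
    ∫ t in (0:ℝ)..T, (fderiv ℝ P (γ t) (1, 0) + fderiv ℝ Q (γ t) (0, 1))
      = ∫ t in (0:ℝ)..T, k (γ t) := by
  -- basic notation
  set X : ℝ × ℝ → ℝ × ℝ := fun p => (P p, Q p) with hXdef
  have hγ' : ∀ t, HasDerivAt γ (X (γ t)) t := hγ
  have hγc : Continuous γ := continuous_iff_continuousAt.2 fun t => (hγ t).continuousAt
  have hXU : ContDiffOn ℝ 1 X U := hP.prodMk hQ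
  -- differentiability facts
  have hfd : ∀ p ∈ U, HasFDerivAt f (fderiv ℝ f p) p := fun p hp =>
    (((hf.differentiableOn one_ne_zero) p hp).differentiableAt (hU.mem_nhds hp)).hasFDerivAt
  have hPd : ∀ p ∈ U, HasFDerivAt P (fderiv ℝ P p) p := fun p hp =>
    (((hP.differentiableOn one_ne_zero) p hp).differentiableAt (hU.mem_nhds hp)).hasFDerivAt
  have hQd : ∀ p ∈ U, HasFDerivAt Q (fderiv ℝ Q p) p := fun p hp =>
    (((hQ.differentiableOn one_ne_zero) p hp).differentiableAt (hU.mem_nhds hp)).hasFDerivAt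
  -- continuity of the derivatives
  have hfC : ContinuousOn (fderiv ℝ f) U := hf.continuousOn_fderiv_of_isOpen hU le_rfl
  have hPC : ContinuousOn (fderiv ℝ P) U := hP.continuousOn_fderiv_of_isOpen hU le_rfl
  have hQC : ContinuousOn (fderiv ℝ Q) U := hQ.continuousOn_fderiv_of_isOpen hU le_rfl
  have hkc : ContinuousOn k U := hk.continuousOn
  -- further notation
  set N : ℝ → ℝ × ℝ := fun t => (-Q (γ t), P (γ t)) with hNdef
  set Np : ℝ → ℝ × ℝ :=
    fun t => (-(fderiv ℝ Q (γ t) (X (γ t))), fderiv ℝ P (γ t) (X (γ t))) with hNpdef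
  set g : ℝ → ℝ := fun t => fderiv ℝ f (γ t) (N t) with hgdef
  set ρ : ℝ → ℝ := fun t => P (γ t) ^ 2 + Q (γ t) ^ 2 with hρdef
  set ρp : ℝ → ℝ := fun t => 2 * (P (γ t) * fderiv ℝ P (γ t) (X (γ t)))
    + 2 * (Q (γ t) * fderiv ℝ Q (γ t) (X (γ t))) with hρpdef
  set m : ℝ → ℝ :=
    fun t => k (γ t) - (fderiv ℝ P (γ t) (1, 0) + fderiv ℝ Q (γ t) (0, 1)) with hmdef
  set e : ℝ → ℝ := fun t => k (γ t) * g t + fderiv ℝ f (γ t) (Np t)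
    - fderiv ℝ f (γ t) (fderiv ℝ P (γ t) (N t), fderiv ℝ Q (γ t) (N t)) with hedef
  -- invariance reformulated
  have hinv' : ∀ p ∈ U, fderiv ℝ f p (X p) = k p * f p := by
    intro p hp
    rw [clm_apply_basis]
    exact hinv p hp
  -- orthogonality along γ
  have horth : ∀ t, fderiv ℝ f (γ t) (X (γ t)) = 0 := by
    intro t
    have h1 : HasDerivAt (fun s => f (γ s)) (fderiv ℝ f (γ t) (X (γ t))) t :=
      (hfd _ (hγU t)).comp_hasDerivAt t (hγ' t)
    have h2 : (fun s => f (γ s)) = fun _ => (0:ℝ) := funext hγf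
    rw [h2] at h1
    exact h1.unique (hasDerivAt_const t 0)
  -- no singular points on γ
  have hXne : ∀ t, X (γ t) ≠ 0 := by
    intro t h0
    obtain ⟨t₁, t₂, hne⟩ := hnc
    have hc := const_of_singular hU hXU hγU hγ' h0
    exact hne ((hc t₁).trans (hc t₂).symm)
  have hρpos : ∀ t, 0 < ρ t := by
    intro t
    have h : P (γ t) ≠ 0 ∨ Q (γ t) ≠ 0 := by
      by_contra h
      push_neg at h
      exact hXne t (by simp [hXdef, h.1, h.2, Prod.mk_eq_zero])
    rcases h with h | h
    · have := mul_self_pos.mpr h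
      simp only [hρdef]
      nlinarith [sq_nonneg (Q (γ t))]
    · have := mul_self_pos.mpr h
      simp only [hρdef]
      nlinarith [sq_nonneg (P (γ t))]
  -- decomposition of ∇f along γ
  have hdec : ∀ t (v : ℝ × ℝ),
      fderiv ℝ f (γ t) v = g t * ((-Q (γ t)) * v.1 + P (γ t) * v.2) / ρ t := by
    intro t v
    have := clm_decomp (fderiv ℝ f (γ t)) (P (γ t)) (Q (γ t)) (ne_of_gt (hρpos t))
      (horth t) v
    simpa [hgdef, hρdef, hNdef] using this
  have hgne : ∀ t, g t ≠ 0 := by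
    intro t hg0
    have hzero : fderiv ℝ f (γ t) = 0 := by
      refine ContinuousLinearMap.ext fun v => ?_
      rw [hdec t v, hg0]
      simp
    obtain ⟨hP0, hQ0⟩ := hsing (γ t) (hγU t) (hγf t) hzero
    exact hXne t (by simp [hXdef, hP0, hQ0, Prod.mk_eq_zero])
  -- periodicity
  have hγT : γ T = γ 0 := by
    have := hper 0
    rwa [zero_add] at this
  -- derivative facts for N and ρ
  have hN' : ∀ t, HasDerivAt N (Np t) t := by
    intro t
    have hPt : HasDerivAt (fun s => P (γ s)) (fderiv ℝ P (γ t) (X (γ t))) t :=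
      (hPd _ (hγU t)).comp_hasDerivAt t (hγ' t)
    have hQt : HasDerivAt (fun s => Q (γ s)) (fderiv ℝ Q (γ t) (X (γ t))) t :=
      (hQd _ (hγU t)).comp_hasDerivAt t (hγ' t)
    exact hQt.neg.prodMk hPt
  have hρ' : ∀ t, HasDerivAt ρ (ρp t) t := by
    intro t
    have hPt : HasDerivAt (fun s => P (γ s)) (fderiv ℝ P (γ t) (X (γ t))) t :=
      (hPd _ (hγU t)).comp_hasDerivAt t (hγ' t)
    have hQt : HasDerivAt (fun s => Q (γ s)) (fderiv ℝ Q (γ t) (X (γ t))) t :=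
      (hQd _ (hγU t)).comp_hasDerivAt t (hγ' t)
    have : HasDerivAt (fun s => P (γ s) * P (γ s) + Q (γ s) * Q (γ s)) _ t :=
      (hPt.mul hPt).add (hQt.mul hQt)
    convert this using 1
    · funext s; simp [hρdef]; ring
    · simp only [hρpdef]; ring
  -- continuity facts
  have hNc : Continuous N := by
    have h1 : Continuous fun t => P (γ t) := hP.continuousOn.comp_continuous hγc hγU
    have h2 : Continuous fun t => Q (γ t) := hQ.continuousOn.comp_continuous hγc hγU
    exact h2.neg.prodMk h1
  have hNpc : Continuous Np := by
    have hPdγ : Continuous fun t => fderiv ℝ P (γ t) := hPC.comp_continuous hγc hγU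
    have hQdγ : Continuous fun t => fderiv ℝ Q (γ t) := hQC.comp_continuous hγc hγU
    have hXγ : Continuous fun t => X (γ t) := hXU.continuousOn.comp_continuous hγc hγU
    exact (hQdγ.clm_apply hXγ).neg.prodMk (hPdγ.clm_apply hXγ)
  have hgc : Continuous g := by
    have hfdγ : Continuous fun t => fderiv ℝ f (γ t) := hfC.comp_continuous hγc hγU
    exact hfdγ.clm_apply hNc
  have hmc : Continuous m := by
    have hPdγ : Continuous fun t => fderiv ℝ P (γ t) := hPC.comp_continuous hγc hγU
    have hQdγ : Continuous fun t => fderiv ℝ Q (γ t) := hQC.comp_continuous hγc hγU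
    have hkγ : Continuous fun t => k (γ t) := hkc.comp_continuous hγc hγU
    exact hkγ.sub ((hPdγ.clm_apply continuous_const).add (hQdγ.clm_apply continuous_const))
  have hec : Continuous e := by
    have hPdγ : Continuous fun t => fderiv ℝ P (γ t) := hPC.comp_continuous hγc hγU
    have hQdγ : Continuous fun t => fderiv ℝ Q (γ t) := hQC.comp_continuous hγc hγU
    have hfdγ : Continuous fun t => fderiv ℝ f (γ t) := hfC.comp_continuous hγc hγU
    have hkγ : Continuous fun t => k (γ t) := hkc.comp_continuous hγc hγU
    exact ((hkγ.mul hgc).add (hfdγ.clm_apply hNpc)).sub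
      (hfdγ.clm_apply ((hPdγ.clm_apply hNc).prodMk (hQdγ.clm_apply hNc)))
  -- the key integral identity
  have hkey : ∀ t₀ t₁ : ℝ, g t₁ - g t₀ = ∫ t in t₀..t₁, e t := by
    have hPγc : Continuous fun t => P (γ t) := hP.continuousOn.comp_continuous hγc hγU
    have hQγc : Continuous fun t => Q (γ t) := hQ.continuousOn.comp_continuous hγc hγU
    have hXγc : Continuous fun t => X (γ t) := hXU.continuousOn.comp_continuous hγc hγU
    -- the compact tube
    have hK₀c : IsCompact (γ '' Icc (0:ℝ) T) := isCompact_Icc.image hγc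
    have hK₀U : γ '' Icc (0:ℝ) T ⊆ U := by rintro _ ⟨s, -, rfl⟩; exact hγU s
    have hγK₀ : ∀ t, γ t ∈ γ '' Icc (0:ℝ) T := by
      intro t
      obtain ⟨s, hs, hst⟩ := hper.exists_mem_Ico₀ hT t
      exact ⟨s, Ico_subset_Icc_self hs, hst.symm⟩
    obtain ⟨ε₀, hε₀, hth⟩ := hK₀c.exists_thickening_subset_open hU hK₀U
    set K : Set (ℝ × ℝ) := cthickening (ε₀/2) (γ '' Icc (0:ℝ) T) with hKdef
    have hKc : IsCompact K := hK₀c.cthickening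
    have hKU : K ⊆ U :=
      (cthickening_subset_thickening' hε₀ (by linarith) _).trans hth
    have hball : ∀ t, closedBall (γ t) (ε₀/2) ⊆ K := by
      intro t x hx
      exact mem_cthickening_of_dist_le x (γ t) _ _ (hγK₀ t) (by simpa using hx)
    -- bounds on the tube
    obtain ⟨Cf, hCf⟩ := hKc.exists_bound_of_continuousOn (hfC.mono hKU)
    obtain ⟨CP, hCP⟩ := hKc.exists_bound_of_continuousOn (hPC.mono hKU)
    obtain ⟨CQ, hCQ⟩ := hKc.exists_bound_of_continuousOn (hQC.mono hKU)
    obtain ⟨Ck, hCk⟩ := hKc.exists_bound_of_continuousOn (hkc.mono hKU)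
    obtain ⟨B, hB⟩ := hKc.exists_bound_of_continuousOn (hXU.continuousOn.mono hKU)
    have hγK : ∀ t, γ t ∈ K := fun t => self_subset_cthickening _ (hγK₀ t)
    have hCf0 : 0 ≤ Cf := le_trans (norm_nonneg _) (hCf _ (hγK 0))
    have hCP0 : 0 ≤ CP := le_trans (norm_nonneg _) (hCP _ (hγK 0))
    have hCQ0 : 0 ≤ CQ := le_trans (norm_nonneg _) (hCQ _ (hγK 0))
    have hCk0 : 0 ≤ Ck := le_trans (norm_nonneg _) (hCk _ (hγK 0))
    have hB0 : 0 ≤ B := le_trans (norm_nonneg _) (hB _ (hγK 0))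
    have hNB : ∀ t, ‖N t‖ ≤ B := by
      intro t
      have h1 := hB _ (hγK t)
      have h2 : ‖N t‖ = ‖X (γ t)‖ := by
        simp [hNdef, hXdef, Prod.norm_def, max_comm]
      rw [h2]; exact h1
    have hNpB : ∀ t, ‖Np t‖ ≤ (CP + CQ) * B := by
      intro t
      have h1 : |fderiv ℝ P (γ t) (X (γ t))| ≤ CP * B := by
        calc |fderiv ℝ P (γ t) (X (γ t))| ≤ ‖fderiv ℝ P (γ t)‖ * ‖X (γ t)‖ :=
              (fderiv ℝ P (γ t)).le_opNorm _
          _ ≤ CP * B := mul_le_mul (hCP _ (hγK t)) (hB _ (hγK t)) (norm_nonneg _) hCP0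
      have h2 : |fderiv ℝ Q (γ t) (X (γ t))| ≤ CQ * B := by
        calc |fderiv ℝ Q (γ t) (X (γ t))| ≤ ‖fderiv ℝ Q (γ t)‖ * ‖X (γ t)‖ :=
              (fderiv ℝ Q (γ t)).le_opNorm _
          _ ≤ CQ * B := mul_le_mul (hCQ _ (hγK t)) (hB _ (hγK t)) (norm_nonneg _) hCQ0
      rw [hNpdef]
      rw [Prod.norm_def]
      apply max_le
      · simp only [norm_neg, Real.norm_eq_abs]
        nlinarith
      · simp only [Real.norm_eq_abs]
        nlinarith
    set ε : ℝ := (ε₀/2) / (B+1) with hεdef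
    have hεpos : 0 < ε := div_pos (by linarith) (by linarith)
    have htube : ∀ (t z : ℝ), |z| ≤ ε → γ t + z • N t ∈ closedBall (γ t) (ε₀/2) := by
      intro t z hz
      have h1 : dist (γ t + z • N t) (γ t) = ‖z • N t‖ := by
        rw [dist_eq_norm]; congr 1; abel
      rw [mem_closedBall, h1, norm_smul, Real.norm_eq_abs]
      calc |z| * ‖N t‖ ≤ ε * B :=
            mul_le_mul hz (hNB t) (norm_nonneg _) (le_of_lt hεpos)
        _ ≤ ε * (B + 1) := by nlinarith
        _ = ε₀/2 := by rw [hεdef]; field_simp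
    have htubeK : ∀ (t z : ℝ), |z| ≤ ε → γ t + z • N t ∈ K :=
      fun t z hz => hball t (htube t z hz)
    have htubeU : ∀ (t z : ℝ), |z| ≤ ε → γ t + z • N t ∈ U :=
      fun t z hz => hKU (htubeK t z hz)
    -- mean value estimates on the tube
    have hmvf : ∀ (t z : ℝ), |z| ≤ ε → |f (γ t + z • N t) - f (γ t)| ≤ Cf * (|z| * B) := by
      intro t z hz
      have hmv := (convex_closedBall (γ t) (ε₀/2)).norm_image_sub_le_of_norm_hasFDerivWithin_le
        (f := f) (f' := fderiv ℝ f)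
        (fun x hx => (hfd x (hKU (hball t hx))).hasFDerivWithinAt)
        (fun x hx => hCf x (hball t hx))
        (mem_closedBall_self (by linarith)) (htube t z hz)
      have h2 : γ t + z • N t - γ t = z • N t := by abel
      rw [h2] at hmv
      calc |f (γ t + z • N t) - f (γ t)| ≤ Cf * ‖z • N t‖ := hmv
        _ ≤ Cf * (|z| * B) := by
            rw [norm_smul, Real.norm_eq_abs]
            exact mul_le_mul_of_nonneg_left
              (mul_le_mul_of_nonneg_left (hNB t) (abs_nonneg z)) hCf0
    have hmvP : ∀ (t z : ℝ), |z| ≤ ε → |P (γ t + z • N t) - P (γ t)| ≤ CP * (|z| * B) := by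
      intro t z hz
      have hmv := (convex_closedBall (γ t) (ε₀/2)).norm_image_sub_le_of_norm_hasFDerivWithin_le
        (f := P) (f' := fderiv ℝ P)
        (fun x hx => (hPd x (hKU (hball t hx))).hasFDerivWithinAt)
        (fun x hx => hCP x (hball t hx))
        (mem_closedBall_self (by linarith)) (htube t z hz)
      have h2 : γ t + z • N t - γ t = z • N t := by abel
      rw [h2] at hmv
      calc |P (γ t + z • N t) - P (γ t)| ≤ CP * ‖z • N t‖ := hmv
        _ ≤ CP * (|z| * B) := by
            rw [norm_smul, Real.norm_eq_abs]
            exact mul_le_mul_of_nonneg_left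
              (mul_le_mul_of_nonneg_left (hNB t) (abs_nonneg z)) hCP0
    have hmvQ : ∀ (t z : ℝ), |z| ≤ ε → |Q (γ t + z • N t) - Q (γ t)| ≤ CQ * (|z| * B) := by
      intro t z hz
      have hmv := (convex_closedBall (γ t) (ε₀/2)).norm_image_sub_le_of_norm_hasFDerivWithin_le
        (f := Q) (f' := fderiv ℝ Q)
        (fun x hx => (hQd x (hKU (hball t hx))).hasFDerivWithinAt)
        (fun x hx => hCQ x (hball t hx))
        (mem_closedBall_self (by linarith)) (htube t z hz)
      have h2 : γ t + z • N t - γ t = z • N t := by abel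
      rw [h2] at hmv
      calc |Q (γ t + z • N t) - Q (γ t)| ≤ CQ * ‖z • N t‖ := hmv
        _ ≤ CQ * (|z| * B) := by
            rw [norm_smul, Real.norm_eq_abs]
            exact mul_le_mul_of_nonneg_left
              (mul_le_mul_of_nonneg_left (hNB t) (abs_nonneg z)) hCQ0
    have hmvX : ∀ (t z : ℝ), |z| ≤ ε →
        ‖X (γ t) - X (γ t + z • N t)‖ ≤ (CP + CQ) * (|z| * B) := by
      intro t z hz
      have h1 : X (γ t) - X (γ t + z • N t)
          = (P (γ t) - P (γ t + z • N t), Q (γ t) - Q (γ t + z • N t)) := by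
        simp [hXdef, Prod.mk_sub_mk]
      rw [h1, Prod.norm_def]
      have h2 := hmvP t z hz
      have h3 := hmvQ t z hz
      rw [abs_sub_comm] at h2
      rw [abs_sub_comm] at h3
      apply max_le
      · simp only [Real.norm_eq_abs]
        nlinarith [mul_nonneg (mul_nonneg (abs_nonneg z) hB0) hCQ0,
          mul_nonneg (abs_nonneg z) hB0]
      · simp only [Real.norm_eq_abs]
        nlinarith [mul_nonneg (mul_nonneg (abs_nonneg z) hB0) hCP0,
          mul_nonneg (abs_nonneg z) hB0]
    -- algebraic splitting of the integrand
    have hsplit2 : ∀ (t z : ℝ), z ≠ 0 → |z| ≤ ε →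
        (1/z) * fderiv ℝ f (γ t + z • N t) (X (γ t) + z • Np t)
          = k (γ t + z • N t) * (f (γ t + z • N t) / z)
            + fderiv ℝ f (γ t + z • N t) ((1/z) • (X (γ t) - X (γ t + z • N t)))
            + fderiv ℝ f (γ t + z • N t) (Np t) := by
      intro t z hz0 hz
      have hvec : X (γ t) + z • Np t
          = X (γ t + z • N t) + (X (γ t) - X (γ t + z • N t)) + z • Np t := by abel
      rw [hvec, map_add, map_add, map_smul, hinv' _ (htubeU t z hz), map_smul]
      simp only [smul_eq_mul]
      field_simp
    -- derivative in t for fixed z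
    have hFder : ∀ z : ℝ, |z| ≤ ε → ∀ t, HasDerivAt (fun s => f (γ s + z • N s))
        (fderiv ℝ f (γ t + z • N t) (X (γ t) + z • Np t)) t := by
      intro z hz t
      have hin : HasDerivAt (fun s => γ s + z • N s) (X (γ t) + z • Np t) t :=
        (hγ' t).add ((hN' t).const_smul z)
      exact (hfd _ (htubeU t z hz)).comp_hasDerivAt t hin
    have hWc : ∀ z : ℝ, |z| ≤ ε → Continuous
        (fun t => fderiv ℝ f (γ t + z • N t) (X (γ t) + z • Np t)) := by
      intro z hz
      have hΨc : Continuous fun t => γ t + z • N t := hγc.add (hNc.const_smul z)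
      have h1 : Continuous fun t => fderiv ℝ f (γ t + z • N t) :=
        hfC.comp_continuous hΨc (fun t => htubeU t z hz)
      exact h1.clm_apply (hXγc.add (hNpc.const_smul z))
    have hFTC : ∀ z : ℝ, |z| ≤ ε → ∀ a b : ℝ,
        (∫ t in a..b, fderiv ℝ f (γ t + z • N t) (X (γ t) + z • Np t))
          = f (γ b + z • N b) - f (γ a + z • N a) := by
      intro z hz a b
      exact intervalIntegral.integral_eq_sub_of_hasDerivAt
        (fun t _ => hFder z hz t) ((hWc z hz).intervalIntegrable _ _)
    -- eventual facts on the punctured filter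
    have hεev : ∀ᶠ z in nhdsWithin (0:ℝ) {(0:ℝ)}ᶜ, |z| ≤ ε := by
      apply eventually_nhdsWithin_of_eventually_nhds
      filter_upwards [Metric.closedBall_mem_nhds (0:ℝ) hεpos] with z hz
      simpa [Real.dist_eq] using hz
    have hne0 : ∀ᶠ z in nhdsWithin (0:ℝ) {(0:ℝ)}ᶜ, z ≠ 0 := by
      filter_upwards [self_mem_nhdsWithin] with z hz
      exact hz
    -- uniform bound
    set C : ℝ := Ck * (Cf * B) + Cf * ((CP + CQ) * B) + Cf * ((CP + CQ) * B) with hCdef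
    have hbound : ∀ (z : ℝ), z ≠ 0 → |z| ≤ ε → ∀ t : ℝ,
        ‖(1/z) * fderiv ℝ f (γ t + z • N t) (X (γ t) + z • Np t)‖ ≤ C := by
      intro z hz0 hz t
      have hzpos : 0 < |z| := abs_pos.mpr hz0
      rw [hsplit2 t z hz0 hz]
      have hDle : ‖fderiv ℝ f (γ t + z • N t)‖ ≤ Cf := hCf _ (htubeK t z hz)
      have h1 : ‖k (γ t + z • N t)‖ ≤ Ck := hCk _ (htubeK t z hz)
      have h2 : ‖f (γ t + z • N t)‖ ≤ Cf * (|z| * B) := by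
        have := hmvf t z hz
        rw [hγf t, sub_zero] at this
        simpa [Real.norm_eq_abs] using this
      have h3 : ‖f (γ t + z • N t) / z‖ ≤ Cf * B := by
        rw [norm_div, Real.norm_eq_abs z, div_le_iff₀ hzpos]
        calc ‖f (γ t + z • N t)‖ ≤ Cf * (|z| * B) := h2
          _ = Cf * B * |z| := by ring
      have hA : ‖k (γ t + z • N t) * (f (γ t + z • N t) / z)‖ ≤ Ck * (Cf * B) := by
        rw [norm_mul]
        exact mul_le_mul h1 h3 (norm_nonneg _) hCk0
      have hnormv : ‖(1/z) • (X (γ t) - X (γ t + z • N t))‖ ≤ (CP + CQ) * B := by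
        rw [norm_smul, Real.norm_eq_abs, abs_div, abs_one, div_mul_eq_mul_div,
          div_le_iff₀ hzpos, one_mul]
        calc ‖X (γ t) - X (γ t + z • N t)‖ ≤ (CP + CQ) * (|z| * B) := hmvX t z hz
          _ = (CP + CQ) * B * |z| := by ring
      have hB2 : ‖fderiv ℝ f (γ t + z • N t) ((1/z) • (X (γ t) - X (γ t + z • N t)))‖
          ≤ Cf * ((CP + CQ) * B) := by
        refine le_trans ((fderiv ℝ f (γ t + z • N t)).le_opNorm _) ?_
        exact mul_le_mul hDle hnormv (norm_nonneg _) hCf0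
      have hC2 : ‖fderiv ℝ f (γ t + z • N t) (Np t)‖ ≤ Cf * ((CP + CQ) * B) := by
        refine le_trans ((fderiv ℝ f (γ t + z • N t)).le_opNorm _) ?_
        exact mul_le_mul hDle (hNpB t) (norm_nonneg _) hCf0
      rw [hCdef]
      have htri1 := norm_add_le
        (k (γ t + z • N t) * (f (γ t + z • N t) / z)
          + fderiv ℝ f (γ t + z • N t) ((1/z) • (X (γ t) - X (γ t + z • N t))))
        (fderiv ℝ f (γ t + z • N t) (Np t))
      have htri2 := norm_add_le
        (k (γ t + z • N t) * (f (γ t + z • N t) / z))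
        (fderiv ℝ f (γ t + z • N t) ((1/z) • (X (γ t) - X (γ t + z • N t))))
      linarith
    -- pointwise transversal derivatives
    have h0N : ∀ t : ℝ, γ t + (0:ℝ) • N t = γ t := by intro t; simp
    have hslopef : ∀ t : ℝ, Tendsto (fun z : ℝ => f (γ t + z • N t) / z)
        (nhdsWithin (0:ℝ) {(0:ℝ)}ᶜ) (nhds (g t)) := by
      intro t
      have hin : HasDerivAt (fun z : ℝ => γ t + z • N t) (N t) 0 := by
        have h1 : HasDerivAt (fun z : ℝ => z • N t) ((1:ℝ) • N t) 0 :=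
          (hasDerivAt_id 0).smul_const (N t)
        rw [one_smul] at h1
        exact h1.const_add (γ t)
      have hF : HasFDerivAt f (fderiv ℝ f (γ t)) (γ t + (0:ℝ) • N t) := by
        rw [h0N t]; exact hfd _ (hγU t)
      have hd : HasDerivAt (fun z : ℝ => f (γ t + z • N t)) (g t) 0 := by
        have := hF.comp_hasDerivAt 0 hin
        exact this
      have h2 := hasDerivAt_iff_tendsto_slope.mp hd
      have heq : slope (fun z : ℝ => f (γ t + z • N t)) 0
          = fun z => f (γ t + z • N t) / z := by
        funext z
        rw [slope_def_field]
        rw [h0N t, hγf t]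
        simp
      rwa [heq] at h2
    have hslopeX : ∀ t : ℝ, Tendsto
        (fun z : ℝ => (1/z) • (X (γ t) - X (γ t + z • N t)))
        (nhdsWithin (0:ℝ) {(0:ℝ)}ᶜ)
        (nhds (-(fderiv ℝ P (γ t) (N t), fderiv ℝ Q (γ t) (N t)))) := by
      intro t
      have hin : HasDerivAt (fun z : ℝ => γ t + z • N t) (N t) 0 := by
        have h1 : HasDerivAt (fun z : ℝ => z • N t) ((1:ℝ) • N t) 0 :=
          (hasDerivAt_id 0).smul_const (N t)
        rw [one_smul] at h1
        exact h1.const_add (γ t)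
      have hFP : HasFDerivAt P (fderiv ℝ P (γ t)) (γ t + (0:ℝ) • N t) := by
        rw [h0N t]; exact hPd _ (hγU t)
      have hFQ : HasFDerivAt Q (fderiv ℝ Q (γ t)) (γ t + (0:ℝ) • N t) := by
        rw [h0N t]; exact hQd _ (hγU t)
      have hdP : HasDerivAt (fun z : ℝ => P (γ t + z • N t)) (fderiv ℝ P (γ t) (N t)) 0 :=
        hFP.comp_hasDerivAt 0 hin
      have hdQ : HasDerivAt (fun z : ℝ => Q (γ t + z • N t)) (fderiv ℝ Q (γ t) (N t)) 0 :=
        hFQ.comp_hasDerivAt 0 hin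
      have hdX : HasDerivAt (fun z : ℝ => X (γ t + z • N t))
          (fderiv ℝ P (γ t) (N t), fderiv ℝ Q (γ t) (N t)) 0 := hdP.prodMk hdQ
      have h2 := (hasDerivAt_iff_tendsto_slope.mp hdX).neg
      refine h2.congr fun z => ?_
      rw [slope]
      rw [h0N t]
      simp only [vsub_eq_sub, sub_zero]
      rw [one_div, ← smul_neg, neg_sub]
    have hlim : ∀ t : ℝ, Tendsto
        (fun z : ℝ => (1/z) * fderiv ℝ f (γ t + z • N t) (X (γ t) + z • Np t))
        (nhdsWithin (0:ℝ) {(0:ℝ)}ᶜ) (nhds (e t)) := by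
      intro t
      have hlle : nhdsWithin (0:ℝ) {(0:ℝ)}ᶜ ≤ nhds (0:ℝ) := nhdsWithin_le_nhds
      have hΨt0 : Tendsto (fun z : ℝ => γ t + z • N t) (nhds (0:ℝ)) (nhds (γ t)) := by
        have hc : Continuous fun z : ℝ => γ t + z • N t :=
          continuous_const.add (continuous_id.smul continuous_const)
        have := hc.tendsto 0
        rwa [h0N t] at this
      have hA : Tendsto (fun z : ℝ => k (γ t + z • N t))
          (nhdsWithin (0:ℝ) {(0:ℝ)}ᶜ) (nhds (k (γ t))) :=
        ((hkc.continuousAt (hU.mem_nhds (hγU t))).tendsto).comp (hΨt0.mono_left hlle)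
      have hDfc : Tendsto (fun z : ℝ => fderiv ℝ f (γ t + z • N t))
          (nhdsWithin (0:ℝ) {(0:ℝ)}ᶜ) (nhds (fderiv ℝ f (γ t))) :=
        ((hfC.continuousAt (hU.mem_nhds (hγU t))).tendsto).comp (hΨt0.mono_left hlle)
      have heval : Continuous fun q : ((ℝ × ℝ) →L[ℝ] ℝ) × (ℝ × ℝ) => q.1 q.2 :=
        isBoundedBilinearMap_apply.continuous
      have hB2 : Tendsto (fun z : ℝ => fderiv ℝ f (γ t + z • N t)
            ((1/z) • (X (γ t) - X (γ t + z • N t))))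
          (nhdsWithin (0:ℝ) {(0:ℝ)}ᶜ)
          (nhds (fderiv ℝ f (γ t) (-(fderiv ℝ P (γ t) (N t), fderiv ℝ Q (γ t) (N t))))) :=
        (heval.tendsto _).comp (hDfc.prodMk_nhds (hslopeX t))
      have hC2 : Tendsto (fun z : ℝ => fderiv ℝ f (γ t + z • N t) (Np t))
          (nhdsWithin (0:ℝ) {(0:ℝ)}ᶜ) (nhds (fderiv ℝ f (γ t) (Np t))) :=
        (heval.tendsto _).comp (hDfc.prodMk_nhds tendsto_const_nhds)
      have hcomb := ((hA.mul (hslopef t)).add hB2).add hC2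
      have hval : k (γ t) * g t
          + fderiv ℝ f (γ t) (-(fderiv ℝ P (γ t) (N t), fderiv ℝ Q (γ t) (N t)))
          + fderiv ℝ f (γ t) (Np t) = e t := by
        rw [map_neg]
        simp only [hedef]
        ring
      rw [hval] at hcomb
      refine hcomb.congr' ?_
      filter_upwards [hεev, hne0] with z hz hz0
      exact (hsplit2 t z hz0 hz).symm
    -- conclusion by dominated convergence
    intro t₀ t₁
    have hDCT : Tendsto (fun z : ℝ => ∫ t in t₀..t₁,
          (1/z) * fderiv ℝ f (γ t + z • N t) (X (γ t) + z • Np t))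
        (nhdsWithin (0:ℝ) {(0:ℝ)}ᶜ) (nhds (∫ t in t₀..t₁, e t)) := by
      apply intervalIntegral.tendsto_integral_filter_of_dominated_convergence
        (bound := fun _ => C)
      · filter_upwards [hεev] with z hz
        exact (continuous_const.mul (hWc z hz)).aestronglyMeasurable
      · filter_upwards [hεev, hne0] with z hz hz0
        exact MeasureTheory.ae_of_all _ fun t _ => hbound z hz0 hz t
      · exact intervalIntegrable_const
      · exact MeasureTheory.ae_of_all _ fun t _ => hlim t
    have hLHS : Tendsto (fun z : ℝ =>
          (f (γ t₁ + z • N t₁) - f (γ t₀ + z • N t₀)) / z)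
        (nhdsWithin (0:ℝ) {(0:ℝ)}ᶜ) (nhds (g t₁ - g t₀)) := by
      have := (hslopef t₁).sub (hslopef t₀)
      refine this.congr fun z => ?_
      rw [sub_div]
    have hEq : (fun z : ℝ => (f (γ t₁ + z • N t₁) - f (γ t₀ + z • N t₀)) / z)
        =ᶠ[nhdsWithin (0:ℝ) {(0:ℝ)}ᶜ] (fun z : ℝ => ∫ t in t₀..t₁,
          (1/z) * fderiv ℝ f (γ t + z • N t) (X (γ t) + z • Np t)) := by
      filter_upwards [hεev, hne0] with z hz hz0
      rw [intervalIntegral.integral_const_mul, hFTC z hz t₀ t₁]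
      ring
    exact tendsto_nhds_unique hLHS (hDCT.congr' hEq.symm)
  have hg' : ∀ t, HasDerivAt g (e t) t := by
    intro t
    have h1 : HasDerivAt (fun t₁ => ∫ s in (0:ℝ)..t₁, e s) (e t) t :=
      intervalIntegral.integral_hasDerivAt_right (hec.intervalIntegrable 0 t)
        (hec.stronglyMeasurableAtFilter _ _) hec.continuousAt
    have h2 : g = fun t₁ => g 0 + ∫ s in (0:ℝ)..t₁, e s := by
      funext t₁
      have := hkey 0 t₁
      linarith
    rw [h2]
    exact h1.const_add (g 0)
  -- pointwise identity for e
  have h_e : ∀ t, e t = (m t + ρp t / ρ t) * g t := by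
    intro t
    have hρt : ρ t ≠ 0 := ne_of_gt (hρpos t)
    have hgt := hdec t (Np t)
    have hdxn := hdec t (fderiv ℝ P (γ t) (N t), fderiv ℝ Q (γ t) (N t))
    simp only [hedef, hmdef, hρpdef]
    rw [hgt, hdxn]
    simp only [hNpdef, hNdef, hXdef]
    rw [clm_apply_basis (fderiv ℝ P (γ t)) (P (γ t), Q (γ t)),
        clm_apply_basis (fderiv ℝ Q (γ t)) (P (γ t), Q (γ t)),
        clm_apply_basis (fderiv ℝ P (γ t)) (-Q (γ t), P (γ t)),
        clm_apply_basis (fderiv ℝ Q (γ t)) (-Q (γ t), P (γ t))]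
    simp only
    field_simp
    ring
  -- exponential integrating factor
  set E : ℝ → ℝ := fun t => Real.exp (∫ s in (0:ℝ)..t, m s) with hEdef
  have hEpos : ∀ t, 0 < E t := fun t => Real.exp_pos _
  have hE' : ∀ t, HasDerivAt E (m t * E t) t := by
    intro t
    have h1 : HasDerivAt (fun u => ∫ s in (0:ℝ)..u, m s) (m t) t :=
      intervalIntegral.integral_hasDerivAt_right (hmc.intervalIntegrable 0 t)
        (hmc.stronglyMeasurableAtFilter _ _) hmc.continuousAt
    have := h1.exp
    simpa [hEdef, mul_comm] using this
  -- the quotient is constant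
  set Φ : ℝ → ℝ := fun t => g t / (ρ t * E t) with hΦdef
  have hΦ' : ∀ t, HasDerivAt Φ 0 t := by
    intro t
    have hD : HasDerivAt (fun s => ρ s * E s) (ρp t * E t + ρ t * (m t * E t)) t :=
      (hρ' t).mul (hE' t)
    have hDne : ρ t * E t ≠ 0 := (mul_pos (hρpos t) (hEpos t)).ne'
    have hq := (hg' t).div hD hDne
    have hval : (e t * (ρ t * E t) - g t * (ρp t * E t + ρ t * (m t * E t)))
        / (ρ t * E t) ^ 2 = 0 := by
      have hρt : ρ t ≠ 0 := ne_of_gt (hρpos t)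
      rw [h_e t]
      field_simp
      ring
    rw [hval] at hq
    exact hq
  have hΦT : Φ T = Φ 0 := by
    have hdiff : Differentiable ℝ Φ := fun t => (hΦ' t).differentiableAt
    have hz : ∀ t, deriv Φ t = 0 := fun t => (hΦ' t).deriv
    exact is_const_of_deriv_eq_zero hdiff hz T 0
  -- conclusion
  have hE0 : E 0 = 1 := by simp [hEdef]
  have hgT : g T = g 0 := by simp only [hgdef, hNdef, hγT]
  have hρT : ρ T = ρ 0 := by simp only [hρdef, hγT]
  have hET : E T = 1 := by
    have h1 : g 0 / (ρ 0 * E T) = g 0 / (ρ 0 * E 0) := by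
      have := hΦT
      simp only [hΦdef] at this
      rwa [hgT, hρT] at this
    rw [hE0, mul_one] at h1
    have hg0 := hgne 0
    have hρ0 := (hρpos 0).ne'
    have hETne := (hEpos T).ne'
    field_simp at h1
    exact h1.symm
  have hI : (∫ s in (0:ℝ)..T, m s) = 0 := by
    have h2 := congrArg Real.log hET
    simp only [hEdef] at h2
    rwa [Real.log_exp, Real.log_one] at h2
  have hkγ : Continuous fun t => k (γ t) := hkc.comp_continuous hγc hγU
  have hPdγ : Continuous fun t => fderiv ℝ P (γ t) := hPC.comp_continuous hγc hγU
  have hQdγ : Continuous fun t => fderiv ℝ Q (γ t) := hQC.comp_continuous hγc hγU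
  have hdvc : Continuous fun t => fderiv ℝ P (γ t) (1, 0) + fderiv ℝ Q (γ t) (0, 1) :=
    (hPdγ.clm_apply continuous_const).add (hQdγ.clm_apply continuous_const)
  have hsplit : (∫ s in (0:ℝ)..T, m s)
      = (∫ t in (0:ℝ)..T, k (γ t))
        - ∫ t in (0:ℝ)..T, (fderiv ℝ P (γ t) (1, 0) + fderiv ℝ Q (γ t) (0, 1)) := by
    simp only [hmdef]
    exact intervalIntegral.integral_sub (hkγ.intervalIntegrable 0 T)
      (hdvc.intervalIntegrable 0 T)
  rw [hsplit] at hI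
  linarith
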